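/- If κ > 0, m > 0, c ≠ 0 and κ^{1/2} c^2 − (8/√3) m < 0, then there exists a unique r₀ ∈ (0, κ^{−1/2}) with g(r₀) = 0, where g(r) = c^2/r − 24m/(12 − 9κr^2)^{3/2}; moreover g > 0 on (0, r₀) and g < 0 on (r₀, κ^{−1/2}). -/

import Mathlib

/-- If `κ^{1/2} c² − (8/√3) m < 0`, there is a unique `r₀ ∈ (0, κ^{−1/2})` with
`g(r₀) = 0`, where `g(r) = c²/r − 24m/(12 − 9κr²)^{3/2}`; moreover `g > 0` on
`(0, r₀)` and `g < 0` on `(r₀, κ^{−1/2})`. -/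
theorem stmt_5 (κ m c : ℝ) (hκ : 0 < κ) (hm : 0 < m) (hc : c ≠ 0)
    (h : Real.sqrt κ * c ^ 2 - 8 / Real.sqrt 3 * m < 0) :
    ∃ r₀ ∈ Set.Ioo (0 : ℝ) (1 / Real.sqrt κ),
      (c ^ 2 / r₀ - 24 * m / (12 - 9 * κ * r₀ ^ 2) ^ ((3 : ℝ) / 2) = 0) ∧
      (∀ r ∈ Set.Ioo (0 : ℝ) r₀,
        0 < c ^ 2 / r - 24 * m / (12 - 9 * κ * r ^ 2) ^ ((3 : ℝ) / 2)) ∧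
      (∀ r ∈ Set.Ioo r₀ (1 / Real.sqrt κ),
        c ^ 2 / r - 24 * m / (12 - 9 * κ * r ^ 2) ^ ((3 : ℝ) / 2) < 0) ∧
      (∀ r ∈ Set.Ioo (0 : ℝ) (1 / Real.sqrt κ),
        c ^ 2 / r - 24 * m / (12 - 9 * κ * r ^ 2) ^ ((3 : ℝ) / 2) = 0 → r = r₀) := by
  have h3 : (0:ℝ) < Real.sqrt 3 := Real.sqrt_pos.mpr (by norm_num)
  have hs3 : Real.sqrt 3 ^ 2 = 3 := Real.sq_sqrt (by norm_num)
  have hκ' : (0:ℝ) < Real.sqrt κ := Real.sqrt_pos.mpr hκ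
  set b := 1 / Real.sqrt κ with hbdef
  have hb : 0 < b := by positivity
  have hb2 : b ^ 2 = 1 / κ := by
    rw [hbdef, div_pow, one_pow, Real.sq_sqrt hκ.le]
  have hc2 : 0 < c ^ 2 := by positivity
  set f : ℝ → ℝ := fun r => c ^ 2 * (12 - 9 * κ * r ^ 2) ^ ((3:ℝ)/2) - 24 * m * r with hf
  have hA : ∀ r ∈ Set.Icc (0:ℝ) b, (3:ℝ) ≤ 12 - 9 * κ * r ^ 2 := by
    intro r hr
    have h1 : r ^ 2 ≤ b ^ 2 := by nlinarith [hr.1, hr.2]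
    rw [hb2] at h1
    rw [le_div_iff₀ hκ] at h1
    nlinarith
  have hanti : StrictAntiOn f (Set.Icc 0 b) := by
    intro x hx y hy hxy
    have hax := hA x hx; have hay := hA y hy
    have hxy2 : x ^ 2 < y ^ 2 := by nlinarith [hx.1]
    have hκxy : κ * x ^ 2 < κ * y ^ 2 := mul_lt_mul_of_pos_left hxy2 hκ
    have hlt : (12 - 9 * κ * y ^ 2) ^ ((3:ℝ)/2) < (12 - 9 * κ * x ^ 2) ^ ((3:ℝ)/2) := by
      apply Real.rpow_lt_rpow (by linarith) (by linarith) (by norm_num)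
    simp only [hf]
    nlinarith [hlt, hc2, hm, hxy]
  have hcont : ContinuousOn f (Set.Icc 0 b) := by
    apply ContinuousOn.sub
    · apply ContinuousOn.mul continuousOn_const
      apply ContinuousOn.rpow_const (by fun_prop)
      intro x _; right; norm_num
    · fun_prop
  have hf0 : 0 < f 0 := by
    have : (0:ℝ) < (12 - 9 * κ * 0 ^ 2) ^ ((3:ℝ)/2) := by
      apply Real.rpow_pos_of_pos; norm_num
    simp only [hf]
    nlinarith
  have h32 : (3:ℝ) ^ ((3:ℝ)/2) = 3 * Real.sqrt 3 := by
    have h1 : (3:ℝ) ^ ((3:ℝ)/2) = ((3:ℝ) ^ ((1:ℝ)/2)) ^ (3:ℕ) := by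
      rw [← Real.rpow_natCast ((3:ℝ) ^ ((1:ℝ)/2)) 3, ← Real.rpow_mul (by norm_num)]
      norm_num
    rw [h1, ← Real.sqrt_eq_rpow]
    have : Real.sqrt 3 ^ 3 = Real.sqrt 3 ^ 2 * Real.sqrt 3 := by ring
    rw [this, hs3]
  have hfb : f b < 0 := by
    have hbase : 12 - 9 * κ * b ^ 2 = 3 := by
      rw [hb2]; field_simp; norm_num
    have hclean : Real.sqrt 3 * (Real.sqrt κ * c ^ 2) < 8 * m := by
      have h' : Real.sqrt κ * c ^ 2 < 8 / Real.sqrt 3 * m := by linarith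
      have h2 := mul_lt_mul_of_pos_left h' h3
      have h4 : Real.sqrt 3 * (8 / Real.sqrt 3 * m) = 8 * m := by
        field_simp
      linarith [h2, h4.le, h4.ge]
    simp only [hf]
    rw [hbase, h32]
    rw [hbdef, sub_neg, mul_comm (24*m)]
    rw [div_mul_eq_mul_div, lt_div_iff₀ hκ']
    nlinarith [hclean, hc2, h3]
  have hsub : Set.Ioo (0:ℝ) b ⊆ Set.Icc 0 b := Set.Ioo_subset_Icc_self
  -- existence of root of f
  have hiv : (0:ℝ) ∈ f '' Set.Ioo 0 b := by
    apply intermediate_value_Ioo' hb.le hcont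
    exact ⟨hfb, hf0⟩
  obtain ⟨r₀, hr₀mem, hr₀⟩ := hiv
  have hBpos : ∀ r ∈ Set.Ioo (0:ℝ) b, (0:ℝ) < (12 - 9 * κ * r ^ 2) ^ ((3:ℝ)/2) := by
    intro r hr
    exact Real.rpow_pos_of_pos (by linarith [hA r (hsub hr)]) _
  have key : ∀ r ∈ Set.Ioo (0:ℝ) b,
      c ^ 2 / r - 24 * m / (12 - 9 * κ * r ^ 2) ^ ((3:ℝ)/2)
        = f r / (r * (12 - 9 * κ * r ^ 2) ^ ((3:ℝ)/2)) := by
    intro r hr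
    have hB := hBpos r hr
    have hr0 : r ≠ 0 := ne_of_gt hr.1
    simp only [hf]
    field_simp
    have hB' : (12 - r ^ 2 * 9 * κ) ^ ((3:ℝ)/2) ≠ 0 := by
      rw [show r ^ 2 * 9 * κ = 9 * κ * r ^ 2 by ring]; exact hB.ne'
    rw [sub_div, mul_div_cancel_right₀ _ hB']
  have hdenpos : ∀ r ∈ Set.Ioo (0:ℝ) b,
      (0:ℝ) < r * (12 - 9 * κ * r ^ 2) ^ ((3:ℝ)/2) := by
    intro r hr
    exact mul_pos hr.1 (hBpos r hr)
  refine ⟨r₀, hr₀mem, ?_, ?_, ?_, ?_⟩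
  · rw [key r₀ hr₀mem, hr₀, zero_div]
  · intro r hr
    have hrmem : r ∈ Set.Ioo (0:ℝ) b := ⟨hr.1, lt_trans hr.2 hr₀mem.2⟩
    rw [key r hrmem]
    apply div_pos _ (hdenpos r hrmem)
    have := hanti (hsub hrmem) (hsub hr₀mem) hr.2
    linarith [hr₀]
  · intro r hr
    have hrmem : r ∈ Set.Ioo (0:ℝ) b := ⟨lt_trans hr₀mem.1 hr.1, hr.2⟩
    rw [key r hrmem]
    apply div_neg_of_neg_of_pos _ (hdenpos r hrmem)
    have := hanti (hsub hr₀mem) (hsub hrmem) hr.1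
    linarith [hr₀]
  · intro r hrmem hgr
    rw [key r hrmem] at hgr
    have hfr : f r = 0 := by
      rcases div_eq_zero_iff.mp hgr with h' | h'
      · exact h'
      · exact absurd h' (ne_of_gt (hdenpos r hrmem))
    rcases lt_trichotomy r r₀ with hlt | heq | hgt
    · have := hanti (hsub hrmem) (hsub hr₀mem) hlt
      rw [hfr, hr₀] at this; exact absurd this (lt_irrefl 0)
    · exact heq
    · have := hanti (hsub hr₀mem) (hsub hrmem) hgt
      rw [hfr, hr₀] at this; exact absurd this (lt_irrefl 0)
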